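/- Let f ∈ k[x₁,…,xₙ] be a homogeneous polynomial of degree d with symmetric d-tensor A = (a_{i₁⋯i_d}) (so f = Σ a_{i₁⋯i_d} x_{i₁}⋯x_{i_d} with symmetric coefficients) and associated symmetric d-multilinear form Θ on kⁿ, and set r = n − dim ker Θ. Then there exists P ∈ GL(n,k) such that the polynomial g(y) = f(Py) involves only r of the variables y₁,…,yₙ, and for every Q ∈ GL(n,k) the polynomial f(Qy) involves at least r of the variables; that is, the essential number of variables of f equals n − dim ker Θ. -/

import Mathlib

open MvPolynomial Finset

section Aux
variable {k : Type*} [CommRing k] {d n : ℕ}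

/-- expansion of a multilinear map over the standard basis -/
lemma multilinear_expand (Φ : MultilinearMap k (fun _ : Fin d => (Fin n → k)) k)
    (v : Fin d → (Fin n → k)) :
    Φ v = ∑ jdx : Fin d → Fin n, (∏ t, v t (jdx t)) * Φ (fun t => Pi.single (jdx t) 1) := by
  have hv : v = fun t => ∑ i, v t i • (Pi.single i 1 : Fin n → k) := by
    funext t; ext j
    simp [Pi.single_apply, Finset.sum_ite_eq']
  conv_lhs => rw [hv]
  rw [Φ.map_sum]
  refine Finset.sum_congr rfl fun jdx _ => ?_
  rw [Φ.map_smul_univ]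
  simp [smul_eq_mul]

/-- product of X's is a monomial -/
lemma prod_X_eq_monomial {R : Type*} [CommSemiring R] (jdx : Fin d → Fin n) :
    (∏ t, (X (jdx t) : MvPolynomial (Fin n) R)) =
      monomial (∑ t, Finsupp.single (jdx t) 1) 1 := by
  classical
  have : ∀ s : Finset (Fin d), (∏ t ∈ s, (X (jdx t) : MvPolynomial (Fin n) R)) =
      monomial (∑ t ∈ s, Finsupp.single (jdx t) 1) 1 := by
    intro s
    induction s using Finset.induction with
    | empty => simp [monomial_zero']
    | insert _ _ h ih =>
      rw [Finset.prod_insert h, Finset.sum_insert h, ih, X, monomial_mul, one_mul]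
  exact this univ

end Aux
section Aux2
variable {k : Type*} [CommRing k] {d n : ℕ}

/-- symmetry of Θ from symmetry of its coefficients -/
lemma theta_symm (A : (Fin d → Fin n) → k)
    (hA : ∀ (σ : Equiv.Perm (Fin d)) (idx : Fin d → Fin n), A (idx ∘ σ) = A idx)
    (Θ : MultilinearMap k (fun _ : Fin d => (Fin n → k)) k)
    (hΘ : ∀ idx : Fin d → Fin n, Θ (fun t => Pi.single (idx t) (1 : k)) = A idx)
    (σ : Equiv.Perm (Fin d)) (v : Fin d → (Fin n → k)) :
    Θ (v ∘ σ) = Θ v := by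
  rw [multilinear_expand, multilinear_expand]
  simp only [hΘ]
  refine Finset.sum_nbij' (fun jdx => jdx ∘ ⇑σ⁻¹) (fun idx => idx ∘ ⇑σ) (by simp) (by simp)
    (fun jdx _ => by ext t; simp) (fun idx _ => by ext t; simp) ?_
  intro jdx _
  rw [hA σ⁻¹ jdx]
  congr 1
  calc ∏ t, (v ∘ ⇑σ) t (jdx t) = ∏ t, (fun i => v i (jdx (σ⁻¹ i))) (σ t) :=
        Finset.prod_congr rfl fun t _ => by simp
    _ = ∏ t, v t (jdx (σ⁻¹ t)) := Equiv.prod_comp σ fun i => v i (jdx (σ⁻¹ i))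

end Aux2
section Aux3
variable {d n : ℕ}

/-- the exponent multiset of a monomial index -/
lemma mon_toMultiset (jdx : Fin d → Fin n) :
    Finsupp.toMultiset (∑ t, Finsupp.single (jdx t) 1) = Finset.univ.val.map jdx := by
  rw [Finsupp.toMultiset_sum]
  simp only [Finsupp.toMultiset_single, one_smul]
  calc (∑ t : Fin d, ({jdx t} : Multiset (Fin n)))
      = ((Finset.univ.val.map jdx).map (fun a => ({a} : Multiset (Fin n)))).sum := by
        rw [Multiset.map_map]; rfl
    _ = Finset.univ.val.map jdx := Multiset.sum_map_singleton _

/-- two monomial indices with equal monomials differ by a permutation -/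
lemma exists_perm_of_mon_eq {jdx jdx' : Fin d → Fin n}
    (h : (∑ t, Finsupp.single (jdx t) 1 : Fin n →₀ ℕ) = ∑ t, Finsupp.single (jdx' t) 1) :
    ∃ σ : Equiv.Perm (Fin d), jdx' = jdx ∘ σ := by
  have hm : Finset.univ.val.map jdx = Finset.univ.val.map jdx' := by
    rw [← mon_toMultiset, ← mon_toMultiset, h]
  have hperm : (List.ofFn jdx).Perm (List.ofFn jdx') := by
    rw [← Multiset.coe_eq_coe]
    simpa using hm
  set σ₁ := Tuple.sort jdx
  set σ₂ := Tuple.sort jdx'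
  have hsorted : jdx ∘ σ₁ = jdx' ∘ σ₂ := by
    apply List.ofFn_injective
    refine List.Perm.eq_of_sortedLE (Tuple.monotone_sort jdx).sortedLE_ofFn
      (Tuple.monotone_sort jdx').sortedLE_ofFn ?_
    exact ((σ₁.ofFn_comp_perm jdx).trans hperm).trans (σ₂.ofFn_comp_perm jdx').symm
  refine ⟨σ₂⁻¹.trans σ₁, ?_⟩
  funext t
  have := congrFun hsorted (σ₂⁻¹ t)
  simpa using this.symm

end Aux3
section Aux4
variable {d n : ℕ}

lemma mon_comp_perm (jdx : Fin d → Fin n) (σ : Equiv.Perm (Fin d)) :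
    (∑ t, Finsupp.single ((jdx ∘ σ) t) 1 : Fin n →₀ ℕ) = ∑ t, Finsupp.single (jdx t) 1 :=
  Equiv.sum_comp σ fun t => Finsupp.single (jdx t) 1

/-- the number of indices with a given monomial divides `d!` -/
lemma card_mon_fiber_dvd (jdx : Fin d → Fin n) :
    (Finset.univ.filter fun jdx' : Fin d → Fin n =>
        (∑ t, Finsupp.single (jdx' t) 1 : Fin n →₀ ℕ) = ∑ t, Finsupp.single (jdx t) 1).card
      ∣ Nat.factorial d := by
  classical
  set T := Finset.univ.filter fun jdx' : Fin d → Fin n =>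
      (∑ t, Finsupp.single (jdx' t) 1 : Fin n →₀ ℕ) = ∑ t, Finsupp.single (jdx t) 1 with hT
  have hcard : (Finset.univ : Finset (Equiv.Perm (Fin d))).card =
      ∑ y ∈ T, (Finset.univ.filter fun σ : Equiv.Perm (Fin d) => jdx ∘ ⇑σ = y).card := by
    apply Finset.card_eq_sum_card_fiberwise
    intro σ _
    rw [hT, Finset.mem_coe, Finset.mem_filter]
    exact ⟨Finset.mem_univ _, mon_comp_perm jdx σ⟩
  have hconst : ∀ y ∈ T, (Finset.univ.filter fun σ : Equiv.Perm (Fin d) => jdx ∘ ⇑σ = y).card =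
      (Finset.univ.filter fun σ : Equiv.Perm (Fin d) => jdx ∘ ⇑σ = jdx).card := by
    intro y hy
    rw [hT, Finset.mem_filter] at hy
    obtain ⟨σ₀, hσ₀⟩ := exists_perm_of_mon_eq hy.2.symm
    apply Finset.card_bij' (fun σ _ => σ * σ₀⁻¹) (fun σ _ => σ * σ₀)
    · intro σ hσ
      rw [Finset.mem_filter] at hσ ⊢
      refine ⟨Finset.mem_univ _, ?_⟩
      funext t
      have := congrFun hσ.2 (σ₀⁻¹ t)
      simp only [Function.comp_apply, Equiv.Perm.coe_mul] at this ⊢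
      rw [this, hσ₀]
      simp
    · intro σ hσ
      rw [Finset.mem_filter] at hσ ⊢
      refine ⟨Finset.mem_univ _, ?_⟩
      funext t
      have := congrFun hσ.2 (σ₀ t)
      simp only [Function.comp_apply, Equiv.Perm.coe_mul] at this ⊢
      rw [this]
      exact (congrFun hσ₀ t).symm
    · intro σ _; simp [mul_assoc]
    · intro σ _; simp [mul_assoc]
  rw [Finset.sum_congr rfl hconst, Finset.sum_const, smul_eq_mul] at hcard
  refine ⟨(Finset.univ.filter fun σ : Equiv.Perm (Fin d) => jdx ∘ ⇑σ = jdx).card, ?_⟩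
  rw [← hcard]
  rw [show d.factorial = (Fintype.card (Fin d)).factorial by simp, ← Fintype.card_perm]
  rfl

end Aux4
section Aux5
variable {k : Type*} [CommRing k] {d n : ℕ}

lemma aeval_form (A : (Fin d → Fin n) → k)
    (Θ : MultilinearMap k (fun _ : Fin d => (Fin n → k)) k)
    (hΘ : ∀ idx : Fin d → Fin n, Θ (fun t => Pi.single (idx t) (1 : k)) = A idx)
    (M : Matrix (Fin n) (Fin n) k) :
    aeval (fun i => ∑ j, C (M i j) * X j : Fin n → MvPolynomial (Fin n) k)
        (∑ idx : Fin d → Fin n, C (A idx) * ∏ t, X (idx t)) =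
      ∑ jdx : Fin d → Fin n, C (Θ fun t => fun i => M i (jdx t)) *
        monomial (∑ t, Finsupp.single (jdx t) 1) 1 := by
  classical
  rw [map_sum]
  have step1 : ∀ idx : Fin d → Fin n,
      aeval (fun i => ∑ j, C (M i j) * X j : Fin n → MvPolynomial (Fin n) k)
          (C (A idx) * ∏ t, X (idx t)) =
        ∑ jdx : Fin d → Fin n, C (A idx * ∏ t, M (idx t) (jdx t)) *
          monomial (∑ t, Finsupp.single (jdx t) 1) 1 := by
    intro idx
    rw [map_mul, map_prod]
    simp only [aeval_X, aeval_C, algebraMap_eq]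
    rw [Finset.prod_univ_sum]
    rw [Fintype.piFinset_univ, Finset.mul_sum]
    refine Finset.sum_congr rfl fun jdx _ => ?_
    rw [Finset.prod_mul_distrib, ← map_prod, prod_X_eq_monomial]
    ring_nf
    rw [map_mul]
    ring
  rw [Finset.sum_congr rfl fun idx _ => step1 idx, Finset.sum_comm]
  refine Finset.sum_congr rfl fun jdx _ => ?_
  rw [← Finset.sum_mul, ← map_sum]
  congr 2
  rw [multilinear_expand]
  simp only [hΘ]
  exact Finset.sum_congr rfl fun idx _ => mul_comm _ _
end Aux5
section Aux6
variable {d n : ℕ}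

lemma mem_mon_support {jdx : Fin d → Fin n} {j : Fin n} :
    j ∈ (∑ t, Finsupp.single (jdx t) 1 : Fin n →₀ ℕ).support ↔ ∃ t, jdx t = j := by
  classical
  rw [Finsupp.mem_support_iff, Finsupp.finset_sum_apply]
  simp only [Finsupp.single_apply, Finset.sum_ite_eq]
  rw [← Finset.card_filter]
  rw [ne_eq, Finset.card_eq_zero, Finset.filter_eq_empty_iff]
  push_neg
  simp [eq_comm]

end Aux6
section Aux7
variable {k : Type*} [Field k] {d n : ℕ}

/-- if a variable is absent from the transformed polynomial then the corresponding
tensor entries vanish -/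
lemma coeff_vanish (A : (Fin d → Fin n) → k)
    (Θ : MultilinearMap k (fun _ : Fin d => (Fin n → k)) k)
    (hΘ : ∀ idx : Fin d → Fin n, Θ (fun t => Pi.single (idx t) (1 : k)) = A idx)
    (hsymm : ∀ (σ : Equiv.Perm (Fin d)) v, Θ (v ∘ σ) = Θ v)
    (hfac : ((d.factorial : k)) ≠ 0)
    (M : Matrix (Fin n) (Fin n) k) (jdx : Fin d → Fin n) (t : Fin d)
    (hnot : jdx t ∉ (aeval (fun i => ∑ j, C (M i j) * X j : Fin n → MvPolynomial (Fin n) k)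
      (∑ idx : Fin d → Fin n, C (A idx) * ∏ s, X (idx s))).vars) :
    Θ (fun s => fun i => M i (jdx s)) = 0 := by
  classical
  set g := aeval (fun i => ∑ j, C (M i j) * X j : Fin n → MvPolynomial (Fin n) k)
      (∑ idx : Fin d → Fin n, C (A idx) * ∏ s, X (idx s)) with hgdef
  have hg : g = ∑ jdx' : Fin d → Fin n, C (Θ fun s => fun i => M i (jdx' s)) *
      monomial (∑ s, Finsupp.single (jdx' s) 1) 1 := aeval_form A Θ hΘ M
  set T := Finset.univ.filter fun jdx' : Fin d → Fin n =>
      (∑ s, Finsupp.single (jdx' s) 1 : Fin n →₀ ℕ) = ∑ s, Finsupp.single (jdx s) 1 with hTdef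
  have hco : coeff (∑ s, Finsupp.single (jdx s) 1) g =
      (T.card : k) * Θ (fun s => fun i => M i (jdx s)) := by
    rw [hg, coeff_sum]
    simp only [C_mul_monomial, mul_one, coeff_monomial]
    rw [← Finset.sum_filter, ← hTdef]
    have hconst : ∀ jdx' ∈ T, Θ (fun s => fun i => M i (jdx' s)) =
        Θ (fun s => fun i => M i (jdx s)) := by
      intro jdx' hj'
      rw [hTdef, Finset.mem_filter] at hj'
      obtain ⟨σ, hσ⟩ := exists_perm_of_mon_eq hj'.2.symm
      subst hσ
      exact hsymm σ (fun s => fun i => M i (jdx s))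
    rw [Finset.sum_congr rfl hconst, Finset.sum_const, nsmul_eq_mul]
  have hzero : coeff (∑ s, Finsupp.single (jdx s) 1) g = 0 := by
    by_contra hne
    exact hnot ((mem_vars _).mpr ⟨_, mem_support_iff.mpr hne, mem_mon_support.mpr ⟨t, rfl⟩⟩)
  have hcard : (T.card : k) ≠ 0 := by
    obtain ⟨c, hc⟩ := card_mon_fiber_dvd jdx
    intro h0
    apply hfac
    rw [← hTdef] at hc
    rw [hc]
    push_cast
    rw [h0, zero_mul]
  rw [hzero] at hco
  exact (mul_eq_zero.mp hco.symm).resolve_left hcard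

end Aux7
/-- Let `f` be the degree-`d` form (here `d = e + 2 ≥ 3`) with symmetric
`d`-tensor `A` and associated symmetric multilinear form `Θ` on `kⁿ`, and set
`r = n − dim ker Θ`. Then there exists `P ∈ GL(n,k)` such that `f(Py)` involves only `r`
of the variables, and for every `Q ∈ GL(n,k)` the polynomial `f(Qy)` involves at least `r`
variables; i.e. the essential number of variables of `f` equals `n − dim ker Θ`. -/
theorem stmt_5 {k : Type*} [Field k] {n e : ℕ} (he : 1 ≤ e)
    (hchar : CharZero k ∨ ∃ p : ℕ, CharP k p ∧ e + 2 < p)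
    (A : (Fin (e + 2) → Fin n) → k)
    (hA : ∀ (σ : Equiv.Perm (Fin (e + 2))) (idx : Fin (e + 2) → Fin n), A (idx ∘ σ) = A idx)
    (Θ : MultilinearMap k (fun _ : Fin (e + 2) => (Fin n → k)) k)
    (hΘ : ∀ idx : Fin (e + 2) → Fin n, Θ (fun t => Pi.single (idx t) (1 : k)) = A idx)
    (K : Submodule k (Fin n → k))
    (hK : ∀ u : Fin n → k,
      u ∈ K ↔ ∀ v : Fin (e + 2) → (Fin n → k), Θ (Function.update v 0 u) = 0) :
    let f : MvPolynomial (Fin n) k :=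
      ∑ idx : Fin (e + 2) → Fin n, C (A idx) * ∏ t, X (idx t)
    let r : ℕ := n - Module.finrank k ↥K
    (∃ P : Matrix (Fin n) (Fin n) k, IsUnit P ∧
        ∃ S : Finset (Fin n), S.card = r ∧
          (aeval (fun i => ∑ j, C (P i j) * X j : Fin n → MvPolynomial (Fin n) k) f).vars ⊆ S) ∧
    (∀ Q : Matrix (Fin n) (Fin n) k, IsUnit Q →
        r ≤ (aeval (fun i => ∑ j, C (Q i j) * X j : Fin n → MvPolynomial (Fin n) k) f).vars.card) := by
  classical
  intro f r
  have hfac : ((Nat.factorial (e + 2) : k)) ≠ 0 := by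
    rcases hchar with h | ⟨p, hp, hpd⟩
    · exact Nat.cast_ne_zero.mpr (Nat.factorial_ne_zero _)
    · have hp0 : p ≠ 0 := by omega
      have hprime : p.Prime := (CharP.char_is_prime_or_zero k p).resolve_right hp0
      rw [Ne, CharP.cast_eq_zero_iff k p, hprime.dvd_factorial]
      omega
  have hsymm : ∀ (σ : Equiv.Perm (Fin (e + 2))) v, Θ (v ∘ σ) = Θ v := theta_symm A hA Θ hΘ
  have hKzero : ∀ (v : Fin (e + 2) → (Fin n → k)) (t₀ : Fin (e + 2)), v t₀ ∈ K → Θ v = 0 := by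
    intro v t₀ hv
    rw [← hsymm (Equiv.swap 0 t₀) v]
    have h2 := (hK (v t₀)).mp hv (v ∘ ⇑(Equiv.swap 0 t₀))
    have h3 : Function.update (v ∘ ⇑(Equiv.swap 0 t₀)) 0 (v t₀) = v ∘ ⇑(Equiv.swap 0 t₀) := by
      have h4 : (v ∘ ⇑(Equiv.swap 0 t₀)) 0 = v t₀ := by
        simp [Equiv.swap_apply_left]
      rw [← h4, Function.update_eq_self]
    rwa [h3] at h2
  have hfinK : Module.finrank k ↥K ≤ n := by
    have := Submodule.finrank_le K
    rwa [Module.finrank_fin_fun] at this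
  constructor
  · -- existence of P
    obtain ⟨W, hW⟩ := Submodule.exists_isCompl K
    have hrank : Module.finrank k ↥K + Module.finrank k ↥W = n := by
      rw [Submodule.finrank_add_eq_of_isCompl hW, Module.finrank_fin_fun]
    set m := Module.finrank k ↥K
    set w := Module.finrank k ↥W
    have hwm : w + m = n := by omega
    let bK : Module.Basis (Fin m) k ↥K := Module.finBasis k ↥K
    let bW : Module.Basis (Fin w) k ↥W := Module.finBasis k ↥W
    let b0 : Module.Basis (Fin w ⊕ Fin m) k (Fin n → k) :=
      (bW.prod bK).map (Submodule.prodEquivOfIsCompl W K hW.symm)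
    let eqv : (Fin w ⊕ Fin m) ≃ Fin n := finSumFinEquiv.trans (finCongr hwm)
    let b : Module.Basis (Fin n) k (Fin n → k) := b0.reindex eqv
    let P : Matrix (Fin n) (Fin n) k := (Pi.basisFun k (Fin n)).toMatrix b
    have hPu : IsUnit P := by
      have := (Pi.basisFun k (Fin n)).invertibleToMatrix b
      exact isUnit_of_invertible P
    have hPcol : ∀ j : Fin n, (fun i => P i j) = b j := by
      intro j
      funext i
      simp [P, Module.Basis.toMatrix_apply, Pi.basisFun_repr]
    set S : Finset (Fin n) := Finset.univ.image (fun i : Fin w => eqv (Sum.inl i)) with hSdef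
    have hScard : S.card = r := by
      rw [hSdef, Finset.card_image_of_injective _ (fun a b hab => by
        simpa using eqv.injective hab)]
      simp only [Finset.card_univ, Fintype.card_fin]
      omega
    have hbK : ∀ j : Fin n, j ∉ S → b j ∈ K := by
      intro j hj
      obtain ⟨x, hx⟩ := eqv.surjective j
      rcases x with i | i
      · exact absurd (hSdef ▸ Finset.mem_image.mpr ⟨i, Finset.mem_univ _, hx⟩) hj
      · have : b j = b0 (Sum.inr i) := by
          rw [← hx]
          simp [b, Module.Basis.reindex_apply]
        rw [this]
        have : b0 (Sum.inr i) = ↑(bK i) := by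
          simp only [b0, Module.Basis.map_apply]
          rw [Submodule.coe_prodEquivOfIsCompl']
          rw [Module.Basis.prod_apply]
          simp
        rw [this]
        exact (bK i).2
    refine ⟨P, hPu, S, hScard, ?_⟩
    have hg : (aeval (fun i => ∑ j, C (P i j) * X j : Fin n → MvPolynomial (Fin n) k) f) =
        ∑ jdx : Fin (e + 2) → Fin n, C (Θ fun t => fun i => P i (jdx t)) *
          monomial (∑ t, Finsupp.single (jdx t) 1) 1 := aeval_form A Θ hΘ P
    rw [hg]
    have hzero : ∀ jdx : Fin (e + 2) → Fin n, (¬ ∀ t, jdx t ∈ S) →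
        C (Θ fun t => fun i => P i (jdx t)) *
          monomial (∑ t, Finsupp.single (jdx t) 1) (1 : k) = 0 := by
      intro jdx hjdx
      push_neg at hjdx
      obtain ⟨t, ht⟩ := hjdx
      have : Θ (fun t => fun i => P i (jdx t)) = 0 := by
        apply hKzero _ t
        rw [hPcol]
        exact hbK _ ht
      rw [this, map_zero, zero_mul]
    rw [← Finset.sum_filter_of_ne (p := fun jdx => ∀ t, jdx t ∈ S) (fun jdx _ hne => by
      by_contra hc; exact hne (hzero jdx hc))]
    refine Finset.Subset.trans (vars_sum_subset _ _) ?_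
    intro j hj
    rw [Finset.mem_biUnion] at hj
    obtain ⟨jdx, hjdx, hjv⟩ := hj
    rw [Finset.mem_filter] at hjdx
    rw [C_mul_monomial, mul_one] at hjv
    rcases eq_or_ne (Θ fun t => fun i => P i (jdx t)) 0 with h0 | h0
    · rw [h0, monomial_zero] at hjv
      simp at hjv
    · rw [vars_monomial h0] at hjv
      obtain ⟨t, ht⟩ := mem_mon_support.mp hjv
      exact ht ▸ hjdx.2 t
  · -- lower bound
    intro Q hQ
    set g := aeval (fun i => ∑ j, C (Q i j) * X j : Fin n → MvPolynomial (Fin n) k) f with hgdef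
    set V := g.vars with hV
    have hcolQ : ∀ j : Fin n, j ∉ V → (fun i => Q i j) ∈ K := by
      intro j hj
      rw [hK]
      intro v
      have hsurj : Function.Surjective Q.mulVec := Matrix.mulVec_surjective_iff_isUnit.mpr hQ
      choose wv hwv using fun t => hsurj (v t)
      have hupd : Function.update v 0 (fun i => Q i j) =
          fun t => Q.mulVec (Function.update wv 0 (Pi.single j 1) t) := by
        funext t
        rcases eq_or_ne t 0 with rfl | ht
        · simp [Matrix.mulVec_single, Matrix.col_apply']
        · simp [Function.update_of_ne ht, hwv]
      rw [hupd]
      set Θ' : MultilinearMap k (fun _ : Fin (e + 2) => (Fin n → k)) k :=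
        Θ.compLinearMap (fun _ => Q.mulVecLin) with hΘ'
      have h1 : Θ (fun t => Q.mulVec (Function.update wv 0 (Pi.single j 1) t)) =
          Θ' (Function.update wv 0 (Pi.single j 1)) := rfl
      rw [h1, multilinear_expand]
      apply Finset.sum_eq_zero
      intro jdx _
      rcases eq_or_ne (jdx 0) j with hj0 | hj0
      · have hΘ'e : Θ' (fun t => Pi.single (jdx t) (1 : k)) =
            Θ (fun t => fun i => Q i (jdx t)) := by
          rw [hΘ']
          simp only [MultilinearMap.compLinearMap_apply, Matrix.mulVecLin_apply,
            Matrix.mulVec_single, MulOpposite.op_one, one_smul]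
          congr 1
        rw [hΘ'e]
        have := coeff_vanish A Θ hΘ hsymm hfac Q jdx 0 (by rw [hj0]; exact hj)
        rw [this, mul_zero]
      · have hz : Function.update wv 0 (Pi.single j 1) 0 (jdx 0) = 0 := by
          simp [Pi.single_apply, (Ne.symm hj0)]
        rw [Finset.prod_eq_zero (Finset.mem_univ 0) hz, zero_mul]
    have hind : LinearIndependent k (fun j : Fin n => (fun i => Q i j)) :=
      Matrix.linearIndependent_cols_iff_isUnit.mpr hQ
    have hsub : LinearIndependent k
        (fun j : ↥(Vᶜ : Finset (Fin n)) => (⟨fun i => Q i (j : Fin n),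
          hcolQ _ (Finset.mem_compl.mp j.2)⟩ : ↥K)) := by
      apply LinearIndependent.of_comp K.subtype
      exact hind.comp _ Subtype.val_injective
    have hcardle : Fintype.card ↥(Vᶜ : Finset (Fin n)) ≤ Module.finrank k ↥K :=
      hsub.fintype_card_le_finrank
    rw [Fintype.card_coe, Finset.card_compl, Fintype.card_fin] at hcardle
    omega
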